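/- Let K be a field of characteristic not 2 and n a natural number such that the (n+1)-st power I^{n+1}K of the fundamental ideal of the Witt ring of K is torsion-free. Then p(K) ≤ 2^n. -/

import Mathlib

/-- `a` is a sum of `n` squares in `R`. -/
def IsSumSqN {R : Type*} [CommRing R] (n : ℕ) (a : R) : Prop :=
  ∃ x : Fin n → R, a = ∑ i, x i ^ 2

/-- `a` is a sum of squares in `R`. -/
def IsSOS {R : Type*} [CommRing R] (a : R) : Prop := ∃ n, IsSumSqN n a

/-- The level `s(R)`. -/
noncomputable def levelN (R : Type*) [CommRing R] : ℕ∞ :=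
  sInf {n : ℕ∞ | ∃ m : ℕ, (m : ℕ∞) = n ∧ IsSumSqN m (-1 : R)}

/-- The Pythagoras number `p(R)`. -/
noncomputable def pythNum (R : Type*) [CommRing R] : ℕ∞ :=
  sInf {n : ℕ∞ | ∃ m : ℕ, (m : ℕ∞) = n ∧ ∀ a : R, IsSOS a → IsSumSqN m a}

open Classical in
/-- The modified Pythagoras number `p'(R)`. -/
noncomputable def pythNum' (R : Type*) [CommRing R] : ℕ∞ :=
  if ¬ IsSOS (-1 : R) ∨ ringChar R = 2 then pythNum R else levelN R + 1

/-- The hyperbolic diagonal form `m × ⟨1,-1⟩` over `K`. -/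
noncomputable def hypForm (K : Type*) [Field K] (m : ℕ) :
    QuadraticForm K (Fin m ⊕ Fin m → K) :=
  QuadraticMap.weightedSumSquares K (Sum.elim (fun _ => (1 : K)) (fun _ => (-1 : K)))

/-- A quadratic form is hyperbolic if it is isometric to some `m × ⟨1,-1⟩`. -/
def IsHypForm {K : Type*} [Field K] {ι : Type*} [Fintype ι]
    (q : QuadraticForm K (ι → K)) : Prop :=
  ∃ m, QuadraticMap.Equivalent q (hypForm K m)




open QuadraticMap Finset

section Helpers
variable {K : Type*} [Field K] {ι ι' : Type*}

/-- Blockwise linear equivalence on functions on a sum type. -/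
def blockLE (e₁ e₂ : (ι → K) ≃ₗ[K] (ι → K)) : (ι ⊕ ι → K) ≃ₗ[K] (ι ⊕ ι → K) where
  toFun w := Sum.elim (e₁ (w ∘ Sum.inl)) (e₂ (w ∘ Sum.inr))
  invFun w := Sum.elim (e₁.symm (w ∘ Sum.inl)) (e₂.symm (w ∘ Sum.inr))
  map_add' a b := by
    have h1 : ((a + b) ∘ Sum.inl) = (a ∘ Sum.inl) + (b ∘ Sum.inl) := rfl
    have h2 : ((a + b) ∘ Sum.inr) = (a ∘ Sum.inr) + (b ∘ Sum.inr) := rfl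
    funext j; cases j <;> simp [h1, h2]
  map_smul' c a := by
    have h1 : ((c • a) ∘ Sum.inl) = c • (a ∘ Sum.inl) := rfl
    have h2 : ((c • a) ∘ Sum.inr) = c • (a ∘ Sum.inr) := rfl
    funext j; cases j <;> simp [h1, h2]
  left_inv w := by
    funext j
    cases j <;> simp [Sum.elim_comp_inl, Sum.elim_comp_inr]
  right_inv w := by
    funext j
    cases j <;> simp [Sum.elim_comp_inl, Sum.elim_comp_inr]

@[simp] lemma blockLE_inl (e₁ e₂ : (ι → K) ≃ₗ[K] (ι → K)) (w : ι ⊕ ι → K) (i : ι) :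
    blockLE e₁ e₂ w (Sum.inl i) = e₁ (w ∘ Sum.inl) i := rfl

@[simp] lemma blockLE_inr (e₁ e₂ : (ι → K) ≃ₗ[K] (ι → K)) (w : ι ⊕ ι → K) (i : ι) :
    blockLE e₁ e₂ w (Sum.inr i) = e₂ (w ∘ Sum.inr) i := rfl

/-- The pointwise 2×2 mixing equivalence used in the Pfister doubling argument. -/
def mixLE (b c s : K) (hs : s ≠ 0) (hbc : b + c = s) : (ι ⊕ ι → K) ≃ₗ[K] (ι ⊕ ι → K) where
  toFun w := Sum.elim (w ∘ Sum.inl + (c/s) • (w ∘ Sum.inr)) (w ∘ Sum.inl - (b/s) • (w ∘ Sum.inr))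
  invFun w := Sum.elim ((b/s) • (w ∘ Sum.inl) + (c/s) • (w ∘ Sum.inr)) (w ∘ Sum.inl - w ∘ Sum.inr)
  map_add' a b := by funext j; cases j <;> (simp [Function.comp]; ring)
  map_smul' r a := by funext j; cases j <;> (simp [Function.comp]; ring)
  left_inv w := by
    obtain rfl : c = s - b := by rw [← hbc]; ring
    funext j
    cases j <;> simp [Function.comp] <;> (field_simp; ring)
  right_inv w := by
    obtain rfl : c = s - b := by rw [← hbc]; ring
    funext j
    cases j <;> simp [Function.comp] <;> (field_simp; ring)

@[simp] lemma mixLE_inl (b c s : K) (hs : s ≠ 0) (hbc : b + c = s) (w : ι ⊕ ι → K) (i : ι) :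
    mixLE b c s hs hbc w (Sum.inl i) = w (Sum.inl i) + (c/s) * w (Sum.inr i) := by
  show w (Sum.inl i) + (c/s) • w (Sum.inr i) = _
  rw [smul_eq_mul]

@[simp] lemma mixLE_inr (b c s : K) (hs : s ≠ 0) (hbc : b + c = s) (w : ι ⊕ ι → K) (i : ι) :
    mixLE b c s hs hbc w (Sum.inr i) = w (Sum.inl i) - (b/s) * w (Sum.inr i) := by
  show w (Sum.inl i) - (b/s) • w (Sum.inr i) = _
  rw [smul_eq_mul]

end Helpers

section Mult
variable (K : Type*) [Field K]

/-- Multiplicativity property for the index type `ι`. -/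
def MulP (ι : Type*) [Fintype ι] : Prop :=
  ∀ s : K, s ≠ 0 → (∃ x : ι → K, s = ∑ i, x i ^ 2) →
    ∃ g : (ι → K) ≃ₗ[K] (ι → K), ∀ y, ∑ i, (g y) i ^ 2 = s * ∑ i, (y i) ^ 2

variable {K}

lemma mulP_congr {ι ι' : Type*} [Fintype ι] [Fintype ι'] (e : ι ≃ ι') (h : MulP K ι) :
    MulP K ι' := by
  intro s hs ⟨x, hx⟩
  obtain ⟨g, hg⟩ := h s hs ⟨x ∘ e, by rw [hx]; exact (Equiv.sum_comp e fun i => x i ^ 2).symm⟩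
  set F : (ι' → K) ≃ₗ[K] (ι → K) := LinearEquiv.funCongrLeft K K e
  refine ⟨F.trans (g.trans F.symm), fun y => ?_⟩
  have h1 : ∀ v : ι → K, ∑ i', (F.symm v) i' ^ 2 = ∑ i, v i ^ 2 := by
    intro v
    have : ∀ i', (F.symm v) i' = v (e.symm i') := fun i' => rfl
    simp_rw [this]
    exact Equiv.sum_comp e.symm fun i => v i ^ 2
  have h2 : ∀ v : ι' → K, ∑ i, (F v) i ^ 2 = ∑ i', v i' ^ 2 := by
    intro v
    have : ∀ i, (F v) i = v (e i) := fun i => rfl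
    simp_rw [this]
    exact Equiv.sum_comp e fun i => v i ^ 2
  calc ∑ i', ((F.trans (g.trans F.symm)) y) i' ^ 2 = ∑ i, (g (F y)) i ^ 2 := h1 _
    _ = s * ∑ i, (F y) i ^ 2 := hg _
    _ = s * ∑ i', y i' ^ 2 := by rw [h2]

lemma sum_sq_split {ι : Type*} [Fintype ι] (w : ι ⊕ ι → K) :
    ∑ j, w j ^ 2 = ∑ i, (w ∘ Sum.inl) i ^ 2 + ∑ i, (w ∘ Sum.inr) i ^ 2 :=
  Fintype.sum_sum_type _

lemma mulP_double {ι : Type*} [Fintype ι] (h : MulP K ι) : MulP K (ι ⊕ ι) := by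
  intro s hs ⟨x, hx⟩
  set b := ∑ i, (x ∘ Sum.inl) i ^ 2 with hb'
  set c := ∑ i, (x ∘ Sum.inr) i ^ 2 with hc'
  have hbc : b + c = s := by rw [hx, sum_sq_split]
  by_cases hb : b = 0
  · have hc : c = s := by rw [← hbc, hb, zero_add]
    obtain ⟨g, hg⟩ := h s hs ⟨x ∘ Sum.inr, by rw [← hc, hc']⟩
    refine ⟨blockLE g g, fun y => ?_⟩
    rw [sum_sq_split]
    have h1 : ((blockLE g g) y ∘ Sum.inl) = g (y ∘ Sum.inl) := rfl
    have h2 : ((blockLE g g) y ∘ Sum.inr) = g (y ∘ Sum.inr) := rfl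
    rw [h1, h2, hg, hg, sum_sq_split, mul_add]
  · by_cases hc : c = 0
    · have hbs : b = s := by rw [← hbc, hc, add_zero]
      obtain ⟨g, hg⟩ := h s hs ⟨x ∘ Sum.inl, by rw [← hbs, hb']⟩
      refine ⟨blockLE g g, fun y => ?_⟩
      rw [sum_sq_split]
      have h1 : ((blockLE g g) y ∘ Sum.inl) = g (y ∘ Sum.inl) := rfl
      have h2 : ((blockLE g g) y ∘ Sum.inr) = g (y ∘ Sum.inr) := rfl
      rw [h1, h2, hg, hg, sum_sq_split, mul_add]
    · obtain ⟨gb, hgb⟩ := h b hb ⟨x ∘ Sum.inl, hb'⟩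
      obtain ⟨gc, hgc⟩ := h c hc ⟨x ∘ Sum.inr, hc'⟩
      set E1 : (ι ⊕ ι → K) ≃ₗ[K] (ι ⊕ ι → K) :=
        blockLE (LinearEquiv.refl K _)
          ((LinearEquiv.smulOfNeZero K _ s hs).trans (gc.trans gb).symm)
      set E2 := mixLE (ι := ι) b c s hs hbc
      set E3 := blockLE gb gc
      refine ⟨E1.trans (E2.trans E3), fun y => ?_⟩
      set z' : ι → K := (gc.trans gb).symm (s • (y ∘ Sum.inr)) with hz'
      have hE1l : (E1 y ∘ Sum.inl) = y ∘ Sum.inl := rfl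
      have hE1r : (E1 y ∘ Sum.inr) = z' := rfl
      have hgz' : gb (gc z') = s • (y ∘ Sum.inr) := by
        have := (gc.trans gb).apply_symm_apply (s • (y ∘ Sum.inr))
        exact this
      have hzsq : b * (c * ∑ i, z' i ^ 2) = s ^ 2 * ∑ i, (y ∘ Sum.inr) i ^ 2 := by
        have h1 : ∑ i, (gb (gc z')) i ^ 2 = b * ∑ i, (gc z') i ^ 2 := hgb _
        rw [hgc] at h1
        rw [hgz'] at h1
        have h2 : ∑ i, (s • (y ∘ Sum.inr)) i ^ 2 = s ^ 2 * ∑ i, (y ∘ Sum.inr) i ^ 2 := by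
          simp only [Pi.smul_apply, smul_eq_mul, mul_pow, Finset.mul_sum]
        rw [h2] at h1
        linear_combination -h1
      -- value of the composite
      have hcomp : ∀ j, (E1.trans (E2.trans E3)) y j = E3 (E2 (E1 y)) j := fun j => rfl
      simp_rw [hcomp]
      rw [sum_sq_split]
      have h3l : (E3 (E2 (E1 y)) ∘ Sum.inl) = gb ((E2 (E1 y)) ∘ Sum.inl) := rfl
      have h3r : (E3 (E2 (E1 y)) ∘ Sum.inr) = gc ((E2 (E1 y)) ∘ Sum.inr) := rfl
      rw [h3l, h3r, hgb, hgc]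
      -- pointwise mixing identity
      have hmix : b * ∑ i, ((E2 (E1 y)) ∘ Sum.inl) i ^ 2 + c * ∑ i, ((E2 (E1 y)) ∘ Sum.inr) i ^ 2
          = s * ∑ i, (y ∘ Sum.inl) i ^ 2 + (b * c / s) * ∑ i, z' i ^ 2 := by
        rw [Finset.mul_sum, Finset.mul_sum, Finset.mul_sum, Finset.mul_sum, ← Finset.sum_add_distrib,
          ← Finset.sum_add_distrib]
        refine Finset.sum_congr rfl fun i _ => ?_
        have e1 : ((E2 (E1 y)) ∘ Sum.inl) i = (E1 y) (Sum.inl i) + (c/s) * (E1 y) (Sum.inr i) :=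
          mixLE_inl b c s hs hbc (E1 y) i
        have e2 : ((E2 (E1 y)) ∘ Sum.inr) i = (E1 y) (Sum.inl i) - (b/s) * (E1 y) (Sum.inr i) :=
          mixLE_inr b c s hs hbc (E1 y) i
        have e3 : (E1 y) (Sum.inl i) = y (Sum.inl i) := congrFun hE1l i
        have e4 : (E1 y) (Sum.inr i) = z' i := congrFun hE1r i
        rw [e1, e2, e3, e4]
        simp only [Function.comp_apply]
        have hcs : c = s - b := by rw [← hbc]; ring
        rw [hcs]
        field_simp
        ring
      rw [hmix]
      have hfin : (b * c / s) * ∑ i, z' i ^ 2 = s * ∑ i, (y ∘ Sum.inr) i ^ 2 := by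
        rw [div_mul_eq_mul_div, div_eq_iff hs]
        linear_combination hzsq
      rw [hfin, sum_sq_split, mul_add]

lemma mulP_two_pow (m : ℕ) : MulP K (Fin (2 ^ m)) := by
  induction m with
  | zero =>
    have h1 : MulP K (Fin 1) := by
      intro s hs ⟨x, hx⟩
      have hx0 : s = x 0 ^ 2 := by rw [hx, Fin.sum_univ_one]
      have hx0' : x 0 ≠ 0 := fun h => hs (by rw [hx0, h]; ring)
      refine ⟨LinearEquiv.smulOfNeZero K _ (x 0) hx0', fun y => ?_⟩
      simp [Fin.sum_univ_one, hx0]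
      ring
    exact mulP_congr (finCongr (by norm_num)) h1
  | succ m ih =>
    have := mulP_double ih
    exact mulP_congr (finSumFinEquiv.trans (finCongr (by rw [pow_succ]; ring))) this

end Mult

section QF
variable {K : Type*} [Field K] {ι ι' : Type*} [Fintype ι] [Fintype ι']

lemma equivalent_of_LE (w : ι → K) (w' : ι' → K) (e : (ι → K) ≃ₗ[K] (ι' → K))
    (h : ∀ v, ∑ i', w' i' * ((e v) i' * (e v) i') = ∑ i, w i * (v i * v i)) :
    QuadraticMap.Equivalent (QuadraticMap.weightedSumSquares K w)
      (QuadraticMap.weightedSumSquares K w') :=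
  ⟨{ toLinearEquiv := e,
     map_app' := fun v => by
       rw [weightedSumSquares_apply, weightedSumSquares_apply]
       simpa [smul_eq_mul] using h v }⟩

lemma equivalent_reindex (w : ι → K) (w' : ι' → K) (σ : ι ≃ ι') (h : ∀ i, w i = w' (σ i)) :
    QuadraticMap.Equivalent (QuadraticMap.weightedSumSquares K w)
      (QuadraticMap.weightedSumSquares K w') := by
  refine equivalent_of_LE w w' (LinearEquiv.funCongrLeft K K σ.symm) fun v => ?_
  have happ : ∀ i', (LinearEquiv.funCongrLeft K K σ.symm v) i' = v (σ.symm i') := fun _ => rfl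
  simp_rw [happ]
  rw [← Equiv.sum_comp σ (fun i' => w' i' * (v (σ.symm i') * v (σ.symm i')))]
  simp_rw [Equiv.symm_apply_apply]
  exact Finset.sum_congr rfl fun i _ => by rw [h i]

lemma exists_isotropic [Nonempty ι] {w : ι → K}
    (h : IsHypForm (QuadraticMap.weightedSumSquares K w)) :
    ∃ v : ι → K, v ≠ 0 ∧ ∑ i, w i * (v i * v i) = 0 := by
  obtain ⟨m, ⟨f⟩⟩ := h
  have hyp_apply : ∀ u : Fin m ⊕ Fin m → K,
      hypForm K m u = ∑ j, (Sum.elim (fun _ => (1:K)) (fun _ => (-1:K))) j * (u j * u j) := by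
    intro u
    rw [hypForm, weightedSumSquares_apply]
    simp [smul_eq_mul]
  rcases eq_or_ne m 0 with rfl | hm
  · refine ⟨fun _ => 1, ?_, ?_⟩
    · intro hcon
      exact one_ne_zero (congrFun hcon (Classical.arbitrary ι))
    · have happ := f.map_app (fun _ => 1)
      rw [hyp_apply] at happ
      simp only [Finset.univ_eq_empty, Finset.sum_empty] at happ
      rw [weightedSumSquares_apply] at happ
      simpa [smul_eq_mul] using happ.symm
  · have hmpos : 0 < m := Nat.pos_of_ne_zero hm
    set u : Fin m ⊕ Fin m → K := fun _ => 1 with hu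
    have hu0 : hypForm K m u = 0 := by
      rw [hyp_apply]
      rw [Fintype.sum_sum_type]
      simp [hu]
    set v : ι → K := f.toLinearEquiv.symm u with hv
    refine ⟨v, ?_, ?_⟩
    · intro hcon
      have : u = f.toLinearEquiv v := (LinearEquiv.apply_symm_apply _ _).symm
      rw [hcon, map_zero] at this
      exact one_ne_zero (congrFun this (Sum.inl ⟨0, hmpos⟩))
    · have happ := f.map_app v
      have hfv : (f v : Fin m ⊕ Fin m → K) = u := by
        show f.toLinearEquiv v = u
        rw [hv, LinearEquiv.apply_symm_apply]
      rw [hfv, hu0] at happ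
      rw [weightedSumSquares_apply] at happ
      simpa [smul_eq_mul] using happ.symm

end QF


section SOS
variable {K : Type*} [Field K]

lemma isSumSqN_succ {k : ℕ} {a : K} (h : IsSumSqN k a) : IsSumSqN (k + 1) a := by
  obtain ⟨x, hx⟩ := h
  exact ⟨Fin.snoc x 0, by rw [Fin.sum_univ_castSucc]; simpa using hx⟩

lemma isSumSqN_mono {k N : ℕ} {a : K} (h : IsSumSqN k a) (hle : k ≤ N) : IsSumSqN N a := by
  induction N, hle using Nat.le_induction with
  | base => exact h
  | succ n hn ih => exact isSumSqN_succ ih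

lemma sum_single_sq {N : ℕ} (i0 : Fin N) (c : K) :
    ∑ i, (if i = i0 then c else 0) ^ 2 = c ^ 2 := by
  have h : ∀ i, (if i = i0 then c else (0:K)) ^ 2 = if i = i0 then c ^ 2 else 0 := by
    intro i; split <;> simp
  simp_rw [h]
  rw [Finset.sum_ite_eq']
  simp

lemma isSumSqN_of_isotropic {N : ℕ} (hN : 0 < N) (hmul : MulP K (Fin N)) (h2 : (2:K) ≠ 0)
    {a : K} (ha : a ≠ 0) (x y : Fin N → K) (hxy : x ≠ 0 ∨ y ≠ 0)
    (heq : ∑ i, x i ^ 2 = a * ∑ i, y i ^ 2) : IsSumSqN N a := by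
  set q := ∑ i, y i ^ 2 with hq
  by_cases hq0 : q = 0
  · -- a zero sum of squares with a nonzero entry: use the level trick
    have hx0 : ∑ i, x i ^ 2 = 0 := by rw [heq, hq0, mul_zero]
    obtain ⟨t, ht0, htsum⟩ : ∃ t : Fin N → K, t ≠ 0 ∧ ∑ i, t i ^ 2 = 0 := by
      rcases hxy with hx | hy
      · exact ⟨x, hx, hx0⟩
      · exact ⟨y, hy, hq0 ▸ hq.symm⟩
    obtain ⟨j, htj⟩ := Function.ne_iff.mp ht0
    simp only [Pi.zero_apply] at htj
    set z : Fin N → K := fun i => if i = j then 0 else t i / t j with hz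
    have hzsum : ∑ i, z i ^ 2 = -1 := by
      have h : ∀ i, z i ^ 2 = (t i / t j) ^ 2 - (if i = j then 1 else 0) := by
        intro i
        by_cases hi : i = j
        · subst hi
          simp [hz, div_self htj]
        · simp [hz, hi]
      simp_rw [h]
      rw [Finset.sum_sub_distrib, Finset.sum_ite_eq']
      simp only [Finset.mem_univ, if_true]
      have : ∑ i, (t i / t j) ^ 2 = (∑ i, t i ^ 2) / t j ^ 2 := by
        rw [Finset.sum_div]
        exact Finset.sum_congr rfl fun i _ => (div_pow _ _ _)
      rw [this, htsum, zero_div, zero_sub]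
    refine ⟨fun i => if i = j then (a+1)/2 else ((a-1)/2) * z i, ?_⟩
    have h : ∀ i, (if i = j then (a+1)/2 else ((a-1)/2) * z i) ^ 2
        = (if i = j then ((a+1)/2)^2 else 0) + ((a-1)/2)^2 * z i ^ 2 := by
      intro i
      by_cases hi : i = j
      · subst hi
        simp [hz]
      · simp [hi, mul_pow]
    simp_rw [h]
    rw [Finset.sum_add_distrib, Finset.sum_ite_eq', ← Finset.mul_sum, hzsum]
    simp only [Finset.mem_univ, if_true]
    field_simp
    ring
  · -- the generic case: use multiplicativity
    have hp0 : (∑ i, x i ^ 2) ≠ 0 := by rw [heq]; exact mul_ne_zero ha hq0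
    obtain ⟨gp, hgp⟩ := hmul _ hp0 ⟨x, rfl⟩
    obtain ⟨gq, hgq⟩ := hmul q hq0 ⟨y, hq⟩
    set i0 : Fin N := ⟨0, hN⟩
    set w : Fin N → K := fun i => if i = i0 then 1/q else 0 with hw
    refine ⟨gp (gq w), ?_⟩
    rw [hgp, hgq, hw, sum_single_sq, heq]
    field_simp

end SOS

/-- If every torsion `(n+1)`-fold Pfister form over `K` is hyperbolic (which for a field of
characteristic not `2` is equivalent to the torsion-freeness of `I^{n+1}K`),
then `p(K) ≤ 2^n`. -/
theorem pyth_le_two_pow_of_torsionFree (K : Type*) [Field K] (h2 : ringChar K ≠ 2) (n : ℕ)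
    (htf : ∀ (a : Fin (n + 1) → Kˣ) (m : ℕ),
      IsHypForm (QuadraticMap.weightedSumSquares K
        (fun p : Fin (2 ^ m) × Finset (Fin (n + 1)) => ∏ i ∈ p.2, (a i : K))) →
      IsHypForm (QuadraticMap.weightedSumSquares K
        (fun S : Finset (Fin (n + 1)) => ∏ i ∈ S, (a i : K)))) :
    pythNum K ≤ 2 ^ n := by
  classical
  have h2K : (2 : K) ≠ 0 := by
    intro h
    exact h2 (CharP.ringChar_of_prime_eq_zero Nat.prime_two h)
  have key : ∀ a : K, IsSOS a → IsSumSqN (2 ^ n) a := by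
    intro a hA
    by_cases ha : a = 0
    · exact ⟨fun _ => 0, by simp [ha]⟩
    obtain ⟨k, hk⟩ := hA
    set M := k with hM
    set T := 2 ^ (M + n) with hT
    have hkT : k ≤ T := le_trans (Nat.lt_two_pow_self (n := k)).le
      (Nat.pow_le_pow_right (by norm_num) (Nat.le_add_right _ _))
    obtain ⟨xT, hxT⟩ := isSumSqN_mono hk hkT
    obtain ⟨G, hG⟩ := mulP_two_pow (K := K) (M + n) a ha ⟨xT, hxT⟩
    -- the Pfister form coefficients
    set au : Fin (n + 1) → Kˣ :=
      fun i => if i = Fin.last n then Units.mk0 (-a) (neg_ne_zero.mpr ha) else 1 with hau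
    have wprod : ∀ S : Finset (Fin (n + 1)),
        (∏ i ∈ S, (au i : K)) = if Fin.last n ∈ S then -a else 1 := by
      intro S
      have h1 : ∀ i ∈ S, (au i : K) = if i = Fin.last n then -a else 1 := by
        intro i _
        by_cases hi : i = Fin.last n <;> simp [hau, hi]
      rw [Finset.prod_congr rfl h1, Finset.prod_ite_eq']
    -- cardinalities of the two halves of the index set
    have eIns : {S : Finset (Fin (n + 1)) // Fin.last n ∈ S} ≃
        {S : Finset (Fin (n + 1)) // Fin.last n ∉ S} :=
      { toFun := fun S => ⟨S.1.erase (Fin.last n), Finset.notMem_erase _ _⟩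
        invFun := fun S => ⟨insert (Fin.last n) S.1, Finset.mem_insert_self _ _⟩
        left_inv := fun S => Subtype.ext (Finset.insert_erase S.2)
        right_inv := fun S => Subtype.ext (Finset.erase_insert S.2) }
    have hcardsum : Fintype.card {S : Finset (Fin (n + 1)) // Fin.last n ∈ S}
        + Fintype.card {S : Finset (Fin (n + 1)) // Fin.last n ∉ S} = 2 ^ (n + 1) := by
      have h := Fintype.card_congr (Equiv.sumCompl (fun S : Finset (Fin (n + 1)) => Fin.last n ∈ S))
      rw [Fintype.card_sum] at h
      rw [h, Fintype.card_finset, Fintype.card_fin]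
    have hcc : Fintype.card {S : Finset (Fin (n + 1)) // Fin.last n ∈ S}
        = Fintype.card {S : Finset (Fin (n + 1)) // Fin.last n ∉ S} := Fintype.card_congr eIns
    have hpow : 2 ^ (n + 1) = 2 ^ n + 2 ^ n := by rw [pow_succ]; ring
    have hcardIn : Fintype.card {S : Finset (Fin (n + 1)) // Fin.last n ∈ S} = 2 ^ n := by omega
    have hcardNot : Fintype.card {S : Finset (Fin (n + 1)) // Fin.last n ∉ S} = 2 ^ n := by omega
    -- the big form is hyperbolic
    set pq : Fin (2 ^ M) × Finset (Fin (n + 1)) → Prop := fun q => Fin.last n ∉ q.2 with hpq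
    have eProdA : {q : Fin (2 ^ M) × Finset (Fin (n + 1)) // pq q} ≃
        Fin (2 ^ M) × {S : Finset (Fin (n + 1)) // Fin.last n ∉ S} :=
      { toFun := fun q => (q.1.1, ⟨q.1.2, q.2⟩)
        invFun := fun q => ⟨(q.1, q.2.1), q.2.2⟩
        left_inv := fun _ => rfl
        right_inv := fun _ => rfl }
    have eProdB : {q : Fin (2 ^ M) × Finset (Fin (n + 1)) // ¬ pq q} ≃
        Fin (2 ^ M) × {S : Finset (Fin (n + 1)) // Fin.last n ∈ S} :=
      { toFun := fun q => (q.1.1, ⟨q.1.2, not_not.mp q.2⟩)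
        invFun := fun q => ⟨(q.1, q.2.1), not_not.mpr q.2.2⟩
        left_inv := fun _ => rfl
        right_inv := fun _ => rfl }
    have hcA : Fintype.card {q : Fin (2 ^ M) × Finset (Fin (n + 1)) // pq q} = T := by
      rw [Fintype.card_congr eProdA, Fintype.card_prod, Fintype.card_fin, hcardNot, hT, pow_add]
    have hcB : Fintype.card {q : Fin (2 ^ M) × Finset (Fin (n + 1)) // ¬ pq q} = T := by
      rw [Fintype.card_congr eProdB, Fintype.card_prod, Fintype.card_fin, hcardIn, hT, pow_add]
    set eA : {q : Fin (2 ^ M) × Finset (Fin (n + 1)) // pq q} ≃ Fin T :=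
      Fintype.equivFinOfCardEq hcA with heA
    set eB : {q : Fin (2 ^ M) × Finset (Fin (n + 1)) // ¬ pq q} ≃ Fin T :=
      Fintype.equivFinOfCardEq hcB with heB
    set σ : (Fin (2 ^ M) × Finset (Fin (n + 1))) ≃ (Fin T ⊕ Fin T) :=
      (Equiv.sumCompl pq).symm.trans (Equiv.sumCongr eA eB) with hσ
    have eqbig : QuadraticMap.Equivalent
        (QuadraticMap.weightedSumSquares K
          (fun p : Fin (2 ^ M) × Finset (Fin (n + 1)) => ∏ i ∈ p.2, (au i : K)))
        (QuadraticMap.weightedSumSquares K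
          (Sum.elim (fun _ : Fin T => (1 : K)) (fun _ : Fin T => -a))) := by
      refine equivalent_reindex _ _ σ fun q => ?_
      by_cases hq : Fin.last n ∈ q.2
      · have h1 : σ q = Sum.inr (eB ⟨q, not_not.mpr hq⟩) := by
          rw [hσ]
          simp only [Equiv.trans_apply]
          rw [Equiv.sumCompl_symm_apply_of_neg (p := pq) (a := q) (not_not.mpr hq)]
          rfl
        rw [h1, wprod, if_pos hq, Sum.elim_inr]
      · have h1 : σ q = Sum.inl (eA ⟨q, hq⟩) := by
          rw [hσ]
          simp only [Equiv.trans_apply]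
          rw [Equiv.sumCompl_symm_apply_of_pos (p := pq) (a := q) hq]
          rfl
        rw [h1, wprod, if_neg hq, Sum.elim_inl]
    have eq2 : QuadraticMap.Equivalent
        (QuadraticMap.weightedSumSquares K
          (Sum.elim (fun _ : Fin T => (1 : K)) (fun _ : Fin T => -a)))
        (hypForm K T) := by
      refine equivalent_of_LE _ _ (blockLE (LinearEquiv.refl K (Fin T → K)) G) fun v => ?_
      rw [Fintype.sum_sum_type, Fintype.sum_sum_type]
      simp only [Sum.elim_inl, Sum.elim_inr, blockLE_inl, blockLE_inr, LinearEquiv.refl_apply,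
        one_mul, neg_mul, neg_one_mul, Function.comp_apply]
      have h1 : ∑ i, G (v ∘ Sum.inr) i * G (v ∘ Sum.inr) i
          = a * ∑ i, (v ∘ Sum.inr) i * (v ∘ Sum.inr) i := by
        have := hG (v ∘ Sum.inr)
        simpa only [pow_two, Finset.mul_sum, Function.comp_apply] using this
      simp only [Function.comp_apply, Finset.mul_sum] at h1
      have h2 : ∑ x : Fin T, -(G (v ∘ Sum.inr) x * G (v ∘ Sum.inr) x)
          = ∑ x : Fin T, -(a * (v (Sum.inr x) * v (Sum.inr x))) := by
        rw [Finset.sum_neg_distrib, Finset.sum_neg_distrib, h1]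
      rw [h2]
    have hypbig : IsHypForm (QuadraticMap.weightedSumSquares K
        (fun p : Fin (2 ^ M) × Finset (Fin (n + 1)) => ∏ i ∈ p.2, (au i : K))) :=
      ⟨T, eqbig.trans eq2⟩
    have hypsmall := htf au M hypbig
    obtain ⟨v, hv0, hvsum⟩ := exists_isotropic hypsmall
    -- split the isotropic relation into the two halves
    set eA' : {S : Finset (Fin (n + 1)) // Fin.last n ∉ S} ≃ Fin (2 ^ n) :=
      Fintype.equivFinOfCardEq hcardNot with heA'
    set eB' : {S : Finset (Fin (n + 1)) // Fin.last n ∈ S} ≃ Fin (2 ^ n) :=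
      Fintype.equivFinOfCardEq hcardIn with heB'
    set x : Fin (2 ^ n) → K := fun i => v (eA'.symm i).1 with hx
    set y : Fin (2 ^ n) → K := fun i => v (eB'.symm i).1 with hy
    have hsplitx : ∑ i, x i ^ 2 = ∑ S : {S : Finset (Fin (n + 1)) // Fin.last n ∉ S}, v S.1 ^ 2 :=
      Equiv.sum_comp eA'.symm fun S => v S.1 ^ 2
    have hsplity : ∑ i, y i ^ 2 = ∑ S : {S : Finset (Fin (n + 1)) // Fin.last n ∈ S}, v S.1 ^ 2 :=
      Equiv.sum_comp eB'.symm fun S => v S.1 ^ 2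
    have htot : (∑ S : {S : Finset (Fin (n + 1)) // Fin.last n ∉ S}, v S.1 ^ 2)
        + (-a) * ∑ S : {S : Finset (Fin (n + 1)) // Fin.last n ∈ S}, v S.1 ^ 2 = 0 := by
      have hsub := Fintype.sum_subtype_add_sum_subtype (fun S : Finset (Fin (n + 1)) =>
        Fin.last n ∉ S) (fun S => (∏ i ∈ S, (au i : K)) * (v S * v S))
      rw [hvsum] at hsub
      have hA : ∀ S : {S : Finset (Fin (n + 1)) // Fin.last n ∉ S},
          (∏ i ∈ S.1, (au i : K)) * (v S.1 * v S.1) = v S.1 ^ 2 := by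
        intro S
        rw [wprod, if_neg S.2, one_mul, pow_two]
      have hB : ∀ S : {S : Finset (Fin (n + 1)) // ¬ Fin.last n ∉ S},
          (∏ i ∈ S.1, (au i : K)) * (v S.1 * v S.1) = (-a) * v S.1 ^ 2 := by
        intro S
        rw [wprod, if_pos (not_not.mp S.2), pow_two]
      rw [Finset.sum_congr rfl (fun S _ => hA S), Finset.sum_congr rfl (fun S _ => hB S)] at hsub
      rw [← Finset.mul_sum] at hsub
      have hBE : (∑ S : {S : Finset (Fin (n + 1)) // ¬ Fin.last n ∉ S}, v S.1 ^ 2)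
          = ∑ S : {S : Finset (Fin (n + 1)) // Fin.last n ∈ S}, v S.1 ^ 2 :=
        Fintype.sum_equiv (Equiv.subtypeEquivRight fun S => not_not)
          (fun S => v S.1 ^ 2) (fun S => v S.1 ^ 2) (fun S => rfl)
      rw [hBE] at hsub
      exact hsub
    have heq : ∑ i, x i ^ 2 = a * ∑ i, y i ^ 2 := by
      rw [hsplitx, hsplity]
      linear_combination htot
    have hxy : x ≠ 0 ∨ y ≠ 0 := by
      obtain ⟨S0, hS0⟩ := Function.ne_iff.mp hv0
      simp only [Pi.zero_apply] at hS0
      by_cases hmem : Fin.last n ∈ S0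
      · refine Or.inr fun hcon => hS0 ?_
        have := congrFun hcon (eB' ⟨S0, hmem⟩)
        simp only [hy, Pi.zero_apply, Equiv.symm_apply_apply] at this
        exact this
      · refine Or.inl fun hcon => hS0 ?_
        have := congrFun hcon (eA' ⟨S0, hmem⟩)
        simp only [hx, Pi.zero_apply, Equiv.symm_apply_apply] at this
        exact this
    exact isSumSqN_of_isotropic (pow_pos two_pos n) (mulP_two_pow n) h2K ha x y hxy heq
  refine sInf_le ?_
  exact ⟨2 ^ n, by push_cast; rfl, key⟩
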